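/- The sequence λ ↦ |{F(n) mod 2^λ : n ≥ 0}| / 2^λ converges, as λ → ∞, to 21/32. That is, the limiting density of residues attained by the Fibonacci sequence modulo powers of 2 equals 21/32. -/

import Mathlib

open Nat

/-- The list of residues modulo 32 attained by the Fibonacci sequence. -/
def fibResList : List ℕ := [0,1,2,3,5,7,8,9,11,13,15,16,17,19,21,23,24,25,27,29,31]

/- Part A: 2-adic valuation facts -/
lemma fib_val' (j : ℕ) : ∃ α t : ℤ,
    (Nat.fib (3 * 2 ^ (j + 1)) : ℤ) = 2 ^ (j + 3) * α ∧
    (Nat.fib (3 * 2 ^ (j + 1) - 1) : ℤ) = 1 + 2 ^ (j + 2) + 2 ^ (j + 3) * t := by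
  induction j with
  | zero => exact ⟨1, 0, by norm_num, by norm_num⟩
  | succ j ih =>
    obtain ⟨α, t, ha, hb⟩ := ih
    set p : ℕ := 3 * 2 ^ (j + 1) - 1 with hp
    have hpos : 0 < 3 * 2 ^ (j + 1) := by positivity
    have hp1 : 3 * 2 ^ (j + 1) = p + 1 := by omega
    have h2 : 3 * 2 ^ (j + 2) = p + (p + 1) + 1 := by
      have : 3 * 2 ^ (j + 2) = 2 * (3 * 2 ^ (j + 1)) := by ring
      omega
    have h3 : 3 * 2 ^ (j + 2) - 1 = p + p + 1 := by omega
    have e1 : (Nat.fib (3 * 2 ^ (j + 2)) : ℤ)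
        = Nat.fib p * Nat.fib (p + 1) + Nat.fib (p + 1) * Nat.fib (p + 2) := by
      rw [h2, Nat.fib_add]; push_cast; ring
    have e2 : (Nat.fib (3 * 2 ^ (j + 2) - 1) : ℤ)
        = Nat.fib p * Nat.fib p + Nat.fib (p + 1) * Nat.fib (p + 1) := by
      rw [h3, Nat.fib_add]; push_cast; ring
    have hfp2 : (Nat.fib (p + 2) : ℤ) = Nat.fib p + Nat.fib (p + 1) := by
      rw [Nat.fib_add_two]; push_cast; ring
    rw [hp1] at ha
    refine ⟨α * (2 ^ (j + 2) * α + (1 + 2 ^ (j + 2) + 2 ^ (j + 3) * t)),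
        t + 2 ^ j * (1 + 2 * t) ^ 2 + 2 ^ (j + 2) * α ^ 2,
        ?_, ?_⟩
    · rw [e1, hfp2, ha, hb]; ring
    · rw [e2, ha, hb]; ring

/- Part B: jump lemma -/
lemma fib_jump (j n : ℕ) :
    (Nat.fib (n + 3 * 2 ^ (j + 1)) : ℤ) ≡ Nat.fib n * (1 + 2 ^ (j + 2)) [ZMOD 2 ^ (j + 3)] := by
  obtain ⟨α, t, ha, hb⟩ := fib_val' j
  set p : ℕ := 3 * 2 ^ (j + 1) - 1 with hp
  have hpos : 0 < 3 * 2 ^ (j + 1) := by positivity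
  have hp1 : 3 * 2 ^ (j + 1) = p + 1 := by omega
  have e1 : (Nat.fib (n + 3 * 2 ^ (j + 1)) : ℤ)
      = Nat.fib p * Nat.fib n + Nat.fib (p + 1) * Nat.fib (n + 1) := by
    have : n + 3 * 2 ^ (j + 1) = p + n + 1 := by omega
    rw [this, Nat.fib_add]; push_cast; ring
  rw [hp1] at ha
  rw [e1, hb, ha]
  have key : (1 + 2 ^ (j + 2) + 2 ^ (j + 3) * t) * Nat.fib n + 2 ^ (j + 3) * α * Nat.fib (n + 1)
      - Nat.fib n * (1 + 2 ^ (j + 2)) = 2 ^ (j + 3) * (t * Nat.fib n + α * Nat.fib (n + 1)) := by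
    ring
  exact (Int.modEq_iff_dvd.2 (by rw [key]; exact Dvd.intro _ rfl)).symm

/- Part C: lifting attained odd residues -/
lemma fib_lift (k m z : ℕ) (hodd : z % 2 = 1)
    (hm : (Nat.fib m : ℤ) ≡ z [ZMOD 2 ^ (5 + k)]) :
    ∃ m' : ℕ, m' % 6 = m % 6 ∧ (Nat.fib m' : ℤ) ≡ z [ZMOD 2 ^ (6 + k)] := by
  have h2 : (Nat.fib m : ℤ) ≡ z [ZMOD ((2 : ℕ) : ℤ)] := by
    exact_mod_cast hm.of_dvd (⟨2 ^ (4 + k), by ring⟩ : (2 : ℤ) ∣ 2 ^ (5 + k))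
  have hfodd : Nat.fib m % 2 = z % 2 := Int.natCast_modEq_iff.mp h2
  obtain ⟨w, hw⟩ : ∃ w : ℕ, Nat.fib m = 2 * w + 1 := ⟨Nat.fib m / 2, by omega⟩
  obtain ⟨d, hd⟩ : ∃ d : ℤ, (z : ℤ) - Nat.fib m = 2 ^ (5 + k) * d := hm.dvd
  have hwz : (Nat.fib m : ℤ) = 2 * w + 1 := by exact_mod_cast hw
  rcases Int.even_or_odd d with ⟨e, he⟩ | ⟨e, he⟩
  · exact ⟨m, rfl, Int.modEq_iff_dvd.2 ⟨e, by rw [hd, he]; ring⟩⟩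
  · refine ⟨m + 3 * 2 ^ (4 + k), ?_, ?_⟩
    · have h6 : 3 * 2 ^ (4 + k) = 6 * 2 ^ (3 + k) := by ring
      rw [h6, Nat.add_mul_mod_self_left]
    · have hj := fib_jump (3 + k) m
      have e1 : (3 + k) + 2 = 5 + k := by ring
      have e2 : (3 + k) + 3 = 6 + k := by ring
      have e3 : (3 + k) + 1 = 4 + k := by ring
      rw [e1, e2, e3] at hj
      refine hj.trans (Int.modEq_iff_dvd.2 ⟨e - w, ?_⟩)
      have hz : (z : ℤ) = (2 * w + 1) + 2 ^ (5 + k) * (2 * e + 1) := by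
        rw [hwz, he] at hd; linarith [hd]
      rw [hwz, hz]; ring

lemma base_even_idx : ∀ r < 32, r % 2 = 1 →
    ∃ m < 48, (m % 6 = 2 ∨ m % 6 = 4) ∧ Nat.fib m % 32 = r := by decide

lemma base_odd_idx : ∀ r < 32, r % 4 = 1 →
    ∃ m < 48, m % 6 = 1 ∧ Nat.fib m % 32 = r := by decide

lemma attained_even_idx (k : ℕ) : ∀ z : ℕ, z % 2 = 1 →
    ∃ m : ℕ, (m % 6 = 2 ∨ m % 6 = 4) ∧ (Nat.fib m : ℤ) ≡ z [ZMOD 2 ^ (5 + k)] := by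
  induction k with
  | zero =>
    intro z hz
    obtain ⟨m, _, hm6, hfm⟩ := base_even_idx (z % 32) (Nat.mod_lt _ (by norm_num)) (by omega)
    refine ⟨m, hm6, ?_⟩
    have h32 : Nat.fib m ≡ z [MOD 32] := by unfold Nat.ModEq; omega
    have h := Int.natCast_modEq_iff.mpr h32
    exact_mod_cast h
  | succ k ih =>
    intro z hz
    obtain ⟨m, hm6, hm⟩ := ih z hz
    obtain ⟨m', hm6', hm'⟩ := fib_lift k m z hz hm
    exact ⟨m', by omega, by rw [show 5 + (k + 1) = 6 + k from by omega]; exact hm'⟩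

lemma attained_odd_idx (k : ℕ) : ∀ z : ℕ, z % 4 = 1 →
    ∃ m : ℕ, m % 6 = 1 ∧ (Nat.fib m : ℤ) ≡ z [ZMOD 2 ^ (5 + k)] := by
  induction k with
  | zero =>
    intro z hz
    obtain ⟨m, _, hm6, hfm⟩ := base_odd_idx (z % 32) (Nat.mod_lt _ (by norm_num)) (by omega)
    refine ⟨m, hm6, ?_⟩
    have h32 : Nat.fib m ≡ z [MOD 32] := by unfold Nat.ModEq; omega
    have h := Int.natCast_modEq_iff.mpr h32
    exact_mod_cast h
  | succ k ih =>
    intro z hz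
    obtain ⟨m, hm6, hm⟩ := ih z hz
    obtain ⟨m', hm6', hm'⟩ := fib_lift k m z (by omega) hm
    exact ⟨m', by omega, by rw [show 5 + (k + 1) = 6 + k from by omega]; exact hm'⟩

/- Part D: surjectivity of the cubic maps -/
lemma cubic_g (k : ℕ) : ∀ z : ℕ, (z % 32 = 0 ∨ z % 32 = 8 ∨ z % 32 = 16 ∨ z % 32 = 24) →
    ∃ y : ℕ, y % 2 = 1 ∧ (5 * (y : ℤ) ^ 3 + 3 * y) ≡ z [ZMOD 2 ^ (5 + k)] := by
  induction k with
  | zero =>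
    intro z hz
    have key : ∀ r < 32, (r = 0 ∨ r = 8 ∨ r = 16 ∨ r = 24) →
        ∃ y < 32, y % 2 = 1 ∧ (5 * y ^ 3 + 3 * y) % 32 = r := by decide
    obtain ⟨y, _, hy2, hyv⟩ := key (z % 32) (Nat.mod_lt _ (by norm_num)) hz
    refine ⟨y, hy2, ?_⟩
    have h32 : (5 * y ^ 3 + 3 * y) ≡ z [MOD 32] := by unfold Nat.ModEq; omega
    have h := Int.natCast_modEq_iff.mpr h32
    have hc : ((32 : ℕ) : ℤ) = 2 ^ (5 + 0) := by norm_num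
    rw [hc] at h
    exact_mod_cast h
  | succ k ih =>
    intro z hz
    obtain ⟨y, hy2, hy⟩ := ih z hz
    obtain ⟨u, hu⟩ : ∃ u : ℤ, (y : ℤ) = 2 * u + 1 := ⟨(y : ℤ) / 2, by omega⟩
    obtain ⟨d, hd⟩ : ∃ d : ℤ, (z : ℤ) - (5 * (y : ℤ) ^ 3 + 3 * y) = 2 ^ (5 + k) * d := hy.dvd
    rw [show 5 + (k + 1) = 6 + k from by omega]
    rcases Int.even_or_odd d with ⟨e, he⟩ | ⟨e, he⟩
    · exact ⟨y, hy2, Int.modEq_iff_dvd.2 ⟨e, by rw [hd, he]; ring⟩⟩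
    · refine ⟨y + 2 ^ (4 + k), ?_, ?_⟩
      · have h4 : 2 ^ (4 + k) = 2 * 2 ^ (3 + k) := by ring
        omega
      · have hcast : ((y + 2 ^ (4 + k) : ℕ) : ℤ) = (y : ℤ) + 2 ^ (4 + k) := by push_cast; ring
        have key : (5 * ((y : ℤ) + 2 ^ (4 + k)) ^ 3 + 3 * ((y : ℤ) + 2 ^ (4 + k)))
            = (5 * (y : ℤ) ^ 3 + 3 * y) + 2 ^ (5 + k)
              + 2 ^ (6 + k) * (4 + 15 * u + 15 * u ^ 2 + 15 * (2 * u + 1) * 2 ^ (2 + k)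
                + 5 * 2 ^ (6 + 2 * k)) := by
          rw [hu]; ring
        refine Int.modEq_iff_dvd.2 ⟨e - (4 + 15 * u + 15 * u ^ 2
            + 15 * (2 * u + 1) * 2 ^ (2 + k) + 5 * 2 ^ (6 + 2 * k)), ?_⟩
        rw [hcast, key]
        have hz' : (z : ℤ) = (5 * (y : ℤ) ^ 3 + 3 * y) + 2 ^ (5 + k) * (2 * e + 1) := by
          rw [he] at hd; linarith [hd]
        rw [hz']; ring

lemma cubic_h (k : ℕ) : ∀ z : ℕ, z % 32 = 2 →
    ∃ y : ℕ, y % 4 = 1 ∧ (5 * (y : ℤ) ^ 3 - 3 * y) ≡ z [ZMOD 2 ^ (5 + k)] := by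
  induction k with
  | zero =>
    intro z hz
    refine ⟨1, by norm_num, ?_⟩
    have h32 : (2 : ℕ) ≡ z [MOD 32] := by unfold Nat.ModEq; omega
    have h := Int.natCast_modEq_iff.mpr h32
    have hc : ((32 : ℕ) : ℤ) = 2 ^ (5 + 0) := by norm_num
    rw [hc] at h
    rw [show ((1:ℕ) : ℤ) = (1 : ℤ) from by norm_num]
    calc (5 * (1:ℤ) ^ 3 - 3 * 1) = ((2 : ℕ) : ℤ) := by norm_num
      _ ≡ z [ZMOD 2 ^ (5 + 0)] := h
  | succ k ih =>
    intro z hz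
    obtain ⟨y, hy4, hy⟩ := ih z hz
    obtain ⟨u, hu⟩ : ∃ u : ℤ, (y : ℤ) = 4 * u + 1 := ⟨(y : ℤ) / 4, by omega⟩
    obtain ⟨d, hd⟩ : ∃ d : ℤ, (z : ℤ) - (5 * (y : ℤ) ^ 3 - 3 * y) = 2 ^ (5 + k) * d := hy.dvd
    rw [show 5 + (k + 1) = 6 + k from by omega]
    rcases Int.even_or_odd d with ⟨e, he⟩ | ⟨e, he⟩
    · exact ⟨y, hy4, Int.modEq_iff_dvd.2 ⟨e, by rw [hd, he]; ring⟩⟩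
    · refine ⟨y + 2 ^ (3 + k), ?_, ?_⟩
      · have h4 : 2 ^ (3 + k) = 4 * 2 ^ (1 + k) := by ring
        omega
      · have hcast : ((y + 2 ^ (3 + k) : ℕ) : ℤ) = (y : ℤ) + 2 ^ (3 + k) := by push_cast; ring
        have key : (5 * ((y : ℤ) + 2 ^ (3 + k)) ^ 3 - 3 * ((y : ℤ) + 2 ^ (3 + k)))
            = (5 * (y : ℤ) ^ 3 - 3 * y) + 2 ^ (5 + k)
              + 2 ^ (6 + k) * (1 + 15 * u + 30 * u ^ 2 + 15 * (4 * u + 1) * 2 ^ k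
                + 5 * 2 ^ (3 + 2 * k)) := by
          rw [hu]; ring
        refine Int.modEq_iff_dvd.2 ⟨e - (1 + 15 * u + 30 * u ^ 2
            + 15 * (4 * u + 1) * 2 ^ k + 5 * 2 ^ (3 + 2 * k)), ?_⟩
        rw [hcast, key]
        have hz' : (z : ℤ) = (5 * (y : ℤ) ^ 3 - 3 * y) + 2 ^ (5 + k) * (2 * e + 1) := by
          rw [he] at hd; linarith [hd]
        rw [hz']; ring

/- Part E: the fib(3m) identity -/
lemma fib_sq (m : ℕ) : (Nat.fib (m + 1) : ℤ) ^ 2 - Nat.fib (m + 1) * Nat.fib m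
    - (Nat.fib m : ℤ) ^ 2 = (-1) ^ m := by
  induction m with
  | zero => norm_num
  | succ m ih =>
    have h2 : (Nat.fib (m + 2) : ℤ) = Nat.fib m + Nat.fib (m + 1) := by
      rw [Nat.fib_add_two]; push_cast; ring
    rw [h2, pow_succ]
    linear_combination -ih

lemma fib_three_mul (q : ℕ) :
    (Nat.fib (3 * (q + 1)) : ℤ) = 5 * (Nat.fib (q + 1) : ℤ) ^ 3
      + 3 * (-1) ^ (q + 1) * Nat.fib (q + 1) := by
  set a : ℤ := (Nat.fib q : ℤ) with ha
  set b : ℤ := (Nat.fib (q + 1) : ℤ) with hb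
  have hab : (Nat.fib (q + 2) : ℤ) = a + b := by rw [Nat.fib_add_two]; push_cast; ring
  have h2m : (Nat.fib (2 * (q + 1)) : ℤ) = a * b + b * (a + b) := by
    have h : 2 * (q + 1) = q + (q + 1) + 1 := by ring
    rw [h, Nat.fib_add]; push_cast [hab]; ring
  have h2m1 : (Nat.fib (2 * (q + 1) + 1) : ℤ) = b ^ 2 + (a + b) ^ 2 := by
    have h : 2 * (q + 1) + 1 = (q + 1) + (q + 1) + 1 := by ring
    rw [h, Nat.fib_add]; push_cast [hab]; ring
  have h3m : (Nat.fib (3 * (q + 1)) : ℤ)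
      = Nat.fib (2 * (q + 1)) * a + Nat.fib (2 * (q + 1) + 1) * b := by
    have h : 3 * (q + 1) = 2 * (q + 1) + q + 1 := by ring
    rw [h, Nat.fib_add]; push_cast; ring
  have key : b ^ 2 - b * a - a ^ 2 = (-1) ^ q := fib_sq q
  rw [h3m, h2m, h2m1, pow_succ]
  linear_combination (-3 * b) * key

/- Part F: residues of fib mod 32 -/
lemma fib_period_32 (n : ℕ) : Nat.fib (n + 48) ≡ Nat.fib n [MOD 32] := by
  have h : Nat.fib (n + 48) = Nat.fib 47 * Nat.fib n + Nat.fib 48 * Nat.fib (n + 1) := by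
    have : n + 48 = 47 + n + 1 := by omega
    rw [this, Nat.fib_add]
  have h47 : Nat.fib 47 ≡ 1 [MOD 32] := by decide
  have h48 : Nat.fib 48 ≡ 0 [MOD 32] := by decide
  calc Nat.fib (n + 48) = Nat.fib 47 * Nat.fib n + Nat.fib 48 * Nat.fib (n + 1) := h
    _ ≡ 1 * Nat.fib n + 0 * Nat.fib (n + 1) [MOD 32] :=
        Nat.ModEq.add (h47.mul_right _) (h48.mul_right _)
    _ = Nat.fib n := by ring

lemma fib_mod48 (n : ℕ) : Nat.fib n % 32 = Nat.fib (n % 48) % 32 := by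
  induction n using Nat.strong_induction_on with
  | _ n ih =>
    by_cases h : n < 48
    · rw [Nat.mod_eq_of_lt h]
    · push_neg at h
      have hn : n = (n - 48) + 48 := by omega
      have h1 : Nat.fib n % 32 = Nat.fib (n - 48) % 32 := by
        rw [hn]; exact fib_period_32 (n - 48)
      have h2 : (n - 48) % 48 = n % 48 := by omega
      rw [h1, ih (n - 48) (by omega), h2]

lemma fib_mem_list (n : ℕ) : Nat.fib n % 32 ∈ fibResList := by
  have key : ∀ r < 48, Nat.fib r % 32 ∈ fibResList := by decide
  rw [fib_mod48]
  exact key (n % 48) (Nat.mod_lt _ (by norm_num))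

/- Part G: the set of attained residues -/
lemma range_eq (k : ℕ) :
    (Set.range fun n : ℕ => (Nat.fib n : ZMod (2 ^ (5 + k))))
      = {x : ZMod (2 ^ (5 + k)) | x.val % 32 ∈ fibResList} := by
  haveI : NeZero (2 ^ (5 + k)) := ⟨by positivity⟩
  ext x
  simp only [Set.mem_range, Set.mem_setOf_eq]
  constructor
  · rintro ⟨n, rfl⟩
    rw [ZMod.val_natCast, Nat.mod_mod_of_dvd _ ⟨2 ^ k, by ring⟩]
    exact fib_mem_list n
  · intro hx
    set z := x.val with hzdef
    have conv : ∀ n : ℕ, (Nat.fib n : ℤ) ≡ z [ZMOD 2 ^ (5 + k)]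
        → (Nat.fib n : ZMod (2 ^ (5 + k))) = x := by
      intro n hn
      have hn' : Nat.fib n ≡ z [MOD 2 ^ (5 + k)] :=
        Int.natCast_modEq_iff.mp (by exact_mod_cast hn)
      have := (ZMod.natCast_eq_natCast_iff _ _ _).mpr hn'
      rw [this]
      exact ZMod.natCast_rightInverse x
    have hz2 : z % 32 % 2 = z % 2 := Nat.mod_mod_of_dvd z (by norm_num)
    simp only [fibResList, List.mem_cons, List.mem_singleton, List.not_mem_nil, or_false] at hx
    by_cases hzo : z % 2 = 1
    · obtain ⟨m, _, hm⟩ := attained_even_idx k z hzo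
      exact ⟨m, conv m hm⟩
    · have hzeven : z % 2 = 0 := by omega
      have hcase : z % 32 = 2 ∨ (z % 32 = 0 ∨ z % 32 = 8 ∨ z % 32 = 16 ∨ z % 32 = 24) := by
        omega
      rcases hcase with h2 | h024
      · obtain ⟨y, hy4, hy⟩ := cubic_h k z h2
        obtain ⟨m, hm6, hm⟩ := attained_odd_idx k y hy4
        obtain ⟨q, rfl⟩ : ∃ q, m = q + 1 := ⟨m - 1, by omega⟩
        have hodd : Odd (q + 1) := by rw [Nat.odd_iff]; omega
        have hid : (Nat.fib (3 * (q + 1)) : ℤ)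
            = 5 * (Nat.fib (q + 1) : ℤ) ^ 3 - 3 * Nat.fib (q + 1) := by
          rw [fib_three_mul q, hodd.neg_one_pow]; ring
        have hcong : (Nat.fib (3 * (q + 1)) : ℤ) ≡ 5 * (y : ℤ) ^ 3 - 3 * y
            [ZMOD 2 ^ (5 + k)] := by
          rw [hid]; exact ((hm.pow 3).mul_left 5).sub (hm.mul_left 3)
        exact ⟨3 * (q + 1), conv _ (hcong.trans hy)⟩
      · obtain ⟨y, hy2, hy⟩ := cubic_g k z h024
        obtain ⟨m, hm6, hm⟩ := attained_even_idx k y hy2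
        obtain ⟨q, rfl⟩ : ∃ q, m = q + 1 := ⟨m - 1, by omega⟩
        have heven : Even (q + 1) := by rw [Nat.even_iff]; omega
        have hid : (Nat.fib (3 * (q + 1)) : ℤ)
            = 5 * (Nat.fib (q + 1) : ℤ) ^ 3 + 3 * Nat.fib (q + 1) := by
          rw [fib_three_mul q, heven.neg_one_pow]; ring
        have hcong : (Nat.fib (3 * (q + 1)) : ℤ) ≡ 5 * (y : ℤ) ^ 3 + 3 * y
            [ZMOD 2 ^ (5 + k)] := by
          rw [hid]; exact ((hm.pow 3).mul_left 5).add (hm.mul_left 3)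
        exact ⟨3 * (q + 1), conv _ (hcong.trans hy)⟩

/- Part H: counting -/
lemma count_blocks (B : ℕ) :
    ((Finset.range (32 * B)).filter (fun v => v % 32 ∈ fibResList)).card = 21 * B := by
  induction B with
  | zero => simp
  | succ B ih =>
    have h : 32 * (B + 1) = 32 * B + 32 := by ring
    have hdisj : Disjoint ((Finset.range (32 * B)).filter (fun v => v % 32 ∈ fibResList))
        (((Finset.range 32).map (addLeftEmbedding (32 * B))).filter
          (fun v => v % 32 ∈ fibResList)) := by
      apply Finset.disjoint_filter_filter
      rw [Finset.disjoint_left]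
      intro a ha hb
      simp only [Finset.mem_range] at ha
      simp only [Finset.mem_map, addLeftEmbedding_apply] at hb
      obtain ⟨v, _, rfl⟩ := hb
      omega
    rw [h, Finset.range_add, Finset.filter_union, Finset.card_union_of_disjoint hdisj, ih,
      Finset.filter_map, Finset.card_map]
    have hcongr : (Finset.range 32).filter
          ((fun v => v % 32 ∈ fibResList) ∘ (addLeftEmbedding (32 * B)))
        = (Finset.range 32).filter (fun v => v % 32 ∈ fibResList) := by
      apply Finset.filter_congr
      intro v _
      simp only [Function.comp_apply, addLeftEmbedding_apply, Nat.mul_add_mod]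
    rw [hcongr]
    have : ((Finset.range 32).filter (fun v => v % 32 ∈ fibResList)).card = 21 := by decide
    rw [this]; ring

lemma card_attained (k : ℕ) :
    Nat.card {x : ZMod (2 ^ (5 + k)) | x.val % 32 ∈ fibResList} = 21 * 2 ^ k := by
  haveI : NeZero (2 ^ (5 + k)) := ⟨by positivity⟩
  rw [Nat.card_eq_card_toFinset, Set.toFinset_setOf]
  have hb : (Finset.univ.filter fun x : ZMod (2 ^ (5 + k)) => x.val % 32 ∈ fibResList).card
      = ((Finset.range (2 ^ (5 + k))).filter fun v => v % 32 ∈ fibResList).card := by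
    refine Finset.card_bij' (fun x _ => x.val) (fun v _ => (v : ZMod (2 ^ (5 + k)))) ?_ ?_ ?_ ?_
    · intro a ha
      simp only [Finset.mem_filter, Finset.mem_univ, true_and] at ha
      simp only [Finset.mem_filter, Finset.mem_range]
      exact ⟨ZMod.val_lt a, ha⟩
    · intro v hv
      simp only [Finset.mem_filter, Finset.mem_range] at hv
      simp only [Finset.mem_filter, Finset.mem_univ, true_and]
      rw [ZMod.val_cast_of_lt hv.1]
      exact hv.2
    · intro a _
      exact ZMod.natCast_rightInverse a
    · intro v hv
      simp only [Finset.mem_filter, Finset.mem_range] at hv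
      exact ZMod.val_cast_of_lt hv.1
  rw [hb, show (2 : ℕ) ^ (5 + k) = 32 * 2 ^ k from by rw [pow_add]; norm_num, count_blocks]

/- Main theorem -/
theorem limiting_density_fibonacci_mod_powers_of_two :
    Filter.Tendsto
      (fun lam : ℕ =>
        (Nat.card (Set.range fun n : ℕ => (Nat.fib n : ZMod (2 ^ lam))) : ℝ) / (2 : ℝ) ^ lam)
      Filter.atTop (nhds (21 / 32)) := by
  have key : ∀ lam : ℕ, 5 ≤ lam →
      (Nat.card (Set.range fun n : ℕ => (Nat.fib n : ZMod (2 ^ lam))) : ℝ) / (2 : ℝ) ^ lam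
        = 21 / 32 := by
    intro lam hlam
    obtain ⟨k, rfl⟩ := Nat.exists_eq_add_of_le hlam
    rw [range_eq, card_attained]
    have h2k : (2 : ℝ) ^ k ≠ 0 := by positivity
    rw [pow_add]
    push_cast
    field_simp
    ring
  refine Filter.Tendsto.congr' ?_ tendsto_const_nhds
  exact Filter.eventually_atTop.2 ⟨5, fun lam h => (key lam h).symm⟩
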